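/- Translation of geodesics by central elements twists quadratically: given φ ∈ N with log φ = a* + x* (a* central, x* ∈ V⊕E) such that x* ⊥ [x*,n] and a' ⊥ [x*,n] where a' = a* + [x*,ξ] for some ξ ∈ n, the curve γ(t) = exp(ξ)·exp((t/ω*)(a'+x*)) is a geodesic translated by φ with φγ(t) = γ(t+ω*), where ω* = |a'+x*| if a'+x* is non-null (and ω*=1 otherwise); γ has unit speed when a'+x* is non-null. -/

import Mathlib

/-- Translation of geodesics: `N` is a simply connected 2-step nilpotent Lie group,
modeled in exponential coordinates via the BCH product `mul x y = x + y + ½[x,y]`.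
Given `φ ∈ N` with `log φ = a* + x*` (`a*` central, `x* ∈ V ⊕ E`) such that
`x* ⊥ [x*, n]` and `a' ⊥ [x*, n]`, where `a' = a* + [x*, ξ]` for some `ξ ∈ n`, the
curve `γ(t) = exp(ξ) · exp((t/ω*) (a' + x*))` is translated by `φ`:
`φ γ(t) = γ(t + ω*)`, where `ω* = |a' + x*|` if `a' + x*` is non-null and `ω* = 1`
otherwise; `γ` is a geodesic (its velocity direction `c = (a' + x*)/ω*` satisfies
the geodesic condition `ad⁺_c c = 0`), of unit speed when `a' + x*` is non-null. -/
theorem translated_geodesics_exist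
    {n : Type*} [LieRing n] [LieAlgebra ℝ n]
    (h2step : ∀ x y w : n, ⁅⁅x, y⁆, w⁆ = 0)
    (B : LinearMap.BilinForm ℝ n) (hBsymm : ∀ x y : n, B x y = B y x)
    (hBnd : B.Nondegenerate)
    (zc : Submodule ℝ n) (hzc : ∀ x : n, x ∈ zc ↔ ∀ y : n, ⁅x, y⁆ = 0)
    (adP : n →ₗ[ℝ] n →ₗ[ℝ] n)
    (hadP : ∀ x y w : n, B (adP x y) w = B y ⁅x, w⁆)
    (mul : n → n → n) (hmul : ∀ x y, mul x y = x + y + (2:ℝ)⁻¹ • ⁅x, y⁆)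
    (astar xstar ξ : n) (hcentral : astar ∈ zc)
    (hxperp : ∀ y : n, B xstar ⁅xstar, y⁆ = 0)
    (a' : n) (ha'def : a' = astar + ⁅xstar, ξ⁆)
    (ha'perp : ∀ y : n, B a' ⁅xstar, y⁆ = 0)
    (ωstar : ℝ)
    (hωstar : ωstar = if B (a' + xstar) (a' + xstar) ≠ 0
        then Real.sqrt |B (a' + xstar) (a' + xstar)| else 1)
    (γ : ℝ → n)
    (hγ : ∀ t : ℝ, γ t = mul ξ ((t / ωstar) • (a' + xstar))) :
    (∀ t : ℝ, mul (astar + xstar) (γ t) = γ (t + ωstar)) ∧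
    adP (a' + xstar) (a' + xstar) = 0 ∧
    (B (a' + xstar) (a' + xstar) ≠ 0 →
      |B (ωstar⁻¹ • (a' + xstar)) (ωstar⁻¹ • (a' + xstar))| = 1) := by

  have hcen : ∀ y : n, ⁅astar, y⁆ = 0 := (hzc astar).mp hcentral
  have h2step' : ∀ x y w : n, ⁅w, ⁅x, y⁆⁆ = 0 := fun x y w => by
    rw [← lie_skew, h2step, neg_zero]
  have hω0 : ωstar ≠ 0 := by
    rw [hωstar]; split_ifs with h
    · exact Real.sqrt_ne_zero'.mpr (abs_pos.mpr h)
    · exact one_ne_zero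
  refine ⟨?_, ?_, ?_⟩
  · intro t
    have hs : (t + ωstar) / ωstar = t / ωstar + 1 := by field_simp
    rw [hγ, hγ, hmul, hmul, hmul, hs, ha'def]
    have hξx : ⁅ξ, xstar⁆ = -⁅xstar, ξ⁆ := by rw [← lie_skew]
    have hcen' : ∀ y : n, ⁅y, astar⁆ = 0 := fun y => by
      rw [← lie_skew, hcen, neg_zero]
    simp only [lie_add, add_lie, lie_smul, smul_lie, smul_add, lie_neg, neg_lie,
      hcen, hcen', h2step, h2step', smul_zero, add_zero, zero_add, neg_zero,
      lie_self]
    rw [hξx]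
    module
  · apply hBnd.1
    intro w
    rw [hadP]
    have hbr : ⁅a' + xstar, w⁆ = ⁅xstar, w⁆ := by
      rw [ha'def]; simp [add_lie, hcen, h2step]
    rw [hbr, map_add, LinearMap.add_apply, ha'perp, hxperp, add_zero]
  · intro h
    set A := B (a' + xstar) (a' + xstar) with hA
    have hpos : (0:ℝ) < |A| := abs_pos.mpr h
    have hsne : Real.sqrt |A| ≠ 0 := Real.sqrt_ne_zero'.mpr hpos
    have hsq : Real.sqrt |A| * Real.sqrt |A| = |A| := Real.mul_self_sqrt (abs_nonneg _)
    rw [hωstar, if_pos h]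
    simp only [map_smul, LinearMap.smul_apply, smul_eq_mul, ← hA]
    have key : (Real.sqrt |A|)⁻¹ * ((Real.sqrt |A|)⁻¹ * A) = A / |A| := by
      rw [← hsq]; field_simp
      rw [Real.sqrt_sq (Real.sqrt_nonneg _)]
    rw [key, abs_div, abs_abs, div_self (abs_ne_zero.mpr h)]
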